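/- arXiv:2410.06364 — 2 statements merged into one kernel-verified Lean document; each statement's English description precedes it below -/
import Mathlib

section
/- For a balanced random-fold hash mapping each of n coordinates to one of k = n/α buckets (each bucket containing exactly α coordinates, mapping uniformly random with respect to the vector), the expected squared error of approximating a vector δ ∈ ℝⁿ by replacing each coordinate with the (sign-corrected) average of its bucket equals ((α−1)/α)·‖δ‖₂². -/
open Finset

/-- Sign of a boolean: `true ↦ 1`, `false ↦ -1`. -/
noncomputable def sgn (b : Bool) : ℝ := if b then 1 else -1


lemma sgn_mul_self (b : Bool) : sgn b * sgn b = 1 := by cases b <;> simp [sgn]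

lemma sgn_not (b : Bool) : sgn (!b) = - sgn b := by cases b <;> simp [sgn]

lemma sum_sgn_mul {n : ℕ} (i j : Fin n) :
    ∑ g : Fin n → Bool, sgn (g i) * sgn (g j) = if i = j then (2:ℝ)^n else 0 := by
  rcases eq_or_ne i j with rfl | hij
  · simp only [if_pos rfl, sgn_mul_self, Finset.sum_const, nsmul_eq_mul, mul_one]
    simp [Fintype.card_fun]
  · rw [if_neg hij]
    have hinv : Function.Involutive (fun g : Fin n → Bool => Function.update g i (!(g i))) := by
      intro g; funext t
      by_cases ht : t = i
      · subst ht; simp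
      · simp [Function.update_of_ne ht]
    set e : Equiv.Perm (Fin n → Bool) := Function.Involutive.toPerm _ hinv with he
    have hcomp := Equiv.sum_comp e (fun g : Fin n → Bool => sgn (g i) * sgn (g j))
    have hneg : ∀ g : Fin n → Bool,
        sgn ((e g) i) * sgn ((e g) j) = -(sgn (g i) * sgn (g j)) := by
      intro g
      have h1 : (e g) i = !(g i) := by simp [he, Function.Involutive.toPerm]
      have h2 : (e g) j = g j := by
        simp [he, Function.Involutive.toPerm, Function.update_of_ne (Ne.symm hij)]
      rw [h1, h2, sgn_not]; ring
    rw [Finset.sum_congr rfl (fun g _ => hneg g), Finset.sum_neg_distrib] at hcomp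
    linarith

lemma per_i_sum {n : ℕ} (α : ℕ) (i : Fin n) (B : Finset (Fin n)) (hiB : i ∈ B) (δ : Fin n → ℝ) :
    ∑ g : Fin n → Bool,
        (δ i - sgn (g i) * (1 / (α : ℝ)) * ∑ j ∈ B, sgn (g j) * δ j) ^ 2
      = (2:ℝ)^n * ((1 - 2/(α:ℝ)) * δ i ^ 2 + (1/(α:ℝ))^2 * ∑ j ∈ B, δ j ^ 2) := by
  set c : ℝ := 1 / (α : ℝ) with hc
  have hpt : ∀ g : Fin n → Bool,
      (δ i - sgn (g i) * c * ∑ j ∈ B, sgn (g j) * δ j) ^ 2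
        = δ i ^ 2 - (2*c) * (∑ j ∈ B, (δ i * δ j) * (sgn (g i) * sgn (g j)))
          + c^2 * ∑ j ∈ B, ∑ j' ∈ B, (δ j * δ j') * (sgn (g j) * sgn (g j')) := by
    intro g
    have hs : sgn (g i) * sgn (g i) = 1 := sgn_mul_self _
    have hT2 : (∑ j ∈ B, sgn (g j) * δ j) * (∑ j ∈ B, sgn (g j) * δ j)
        = ∑ j ∈ B, ∑ j' ∈ B, (δ j * δ j') * (sgn (g j) * sgn (g j')) := by
      rw [Finset.sum_mul_sum]
      exact Finset.sum_congr rfl fun j _ => Finset.sum_congr rfl fun j' _ => by ring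
    have hA : δ i * (sgn (g i) * ∑ j ∈ B, sgn (g j) * δ j)
        = ∑ j ∈ B, (δ i * δ j) * (sgn (g i) * sgn (g j)) := by
      rw [Finset.mul_sum, Finset.mul_sum]
      exact Finset.sum_congr rfl fun j _ => by ring
    calc (δ i - sgn (g i) * c * ∑ j ∈ B, sgn (g j) * δ j) ^ 2
        = δ i ^ 2 - (2*c) * (δ i * (sgn (g i) * ∑ j ∈ B, sgn (g j) * δ j))
          + c^2 * ((sgn (g i) * sgn (g i)) *
            ((∑ j ∈ B, sgn (g j) * δ j) * (∑ j ∈ B, sgn (g j) * δ j))) := by ring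
      _ = _ := by rw [hs, one_mul, hT2, hA]
  have hsumA : ∑ g : Fin n → Bool, ∑ j ∈ B, (δ i * δ j) * (sgn (g i) * sgn (g j))
      = δ i ^ 2 * (2:ℝ)^n := by
    rw [Finset.sum_comm]
    have : ∀ j ∈ B, ∑ g : Fin n → Bool, (δ i * δ j) * (sgn (g i) * sgn (g j))
        = if i = j then δ i * δ j * (2:ℝ)^n else 0 := by
      intro j _
      rw [← Finset.mul_sum, sum_sgn_mul, mul_ite, mul_zero]
    rw [Finset.sum_congr rfl this, Finset.sum_ite_eq, if_pos hiB]
    ring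
  have hsumC : ∑ g : Fin n → Bool, ∑ j ∈ B, ∑ j' ∈ B, (δ j * δ j') * (sgn (g j) * sgn (g j'))
      = (2:ℝ)^n * ∑ j ∈ B, δ j ^ 2 := by
    rw [Finset.sum_comm]
    have step : ∀ j ∈ B, ∑ g : Fin n → Bool, ∑ j' ∈ B, (δ j * δ j') * (sgn (g j) * sgn (g j'))
        = δ j ^ 2 * (2:ℝ)^n := by
      intro j hj
      rw [Finset.sum_comm]
      have : ∀ j' ∈ B, ∑ g : Fin n → Bool, (δ j * δ j') * (sgn (g j) * sgn (g j'))
          = if j = j' then δ j * δ j' * (2:ℝ)^n else 0 := by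
        intro j' _
        rw [← Finset.mul_sum, sum_sgn_mul, mul_ite, mul_zero]
      rw [Finset.sum_congr rfl this, Finset.sum_ite_eq, if_pos hj]
      ring
    rw [Finset.sum_congr rfl step, ← Finset.sum_mul]
    ring
  rw [Finset.sum_congr rfl (fun g _ => hpt g)]
  rw [Finset.sum_add_distrib, Finset.sum_sub_distrib, ← Finset.mul_sum, ← Finset.mul_sum,
    hsumA, hsumC, Finset.sum_const]
  simp only [Finset.card_univ, Fintype.card_fun, Fintype.card_bool, Fintype.card_fin,
    nsmul_eq_mul]
  push_cast
  ring

/-- For a balanced random-fold hash mapping each of `n` coordinates to one of `k = n/α`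
buckets (each bucket containing exactly `α` coordinates), the expected squared error
(over i.i.d. uniform random signs `g`) of approximating `δ ∈ ℝⁿ` by replacing each
coordinate with the sign-corrected average of its bucket equals `((α-1)/α) * ‖δ‖₂²`. -/
theorem sketch_expected_error
    (n α k : ℕ) (hα : 0 < α) (hn : n = α * k)
    (h : Fin n → Fin k)
    (hbal : ∀ j : Fin k, (Finset.univ.filter (fun i => h i = j)).card = α)
    (δ : Fin n → ℝ) :
    (1 / (2 : ℝ) ^ n) *
      ∑ g : Fin n → Bool, ∑ i : Fin n,
        (δ i - sgn (g i) * (1 / (α : ℝ)) *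
          ∑ j ∈ Finset.univ.filter (fun j => h j = h i), sgn (g j) * δ j) ^ 2
    = (((α : ℝ) - 1) / (α : ℝ)) * ∑ i : Fin n, (δ i) ^ 2 := by
  have hdouble : ∑ i : Fin n, ∑ j ∈ Finset.univ.filter (fun j => h j = h i), δ j ^ 2
      = (α : ℝ) * ∑ j : Fin n, δ j ^ 2 := by
    simp only [Finset.sum_filter]
    rw [Finset.sum_comm]
    have : ∀ j : Fin n, (∑ i : Fin n, if h j = h i then δ j ^ 2 else 0)
        = (α : ℝ) * δ j ^ 2 := by
      intro j
      rw [← Finset.sum_filter, Finset.sum_const]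
      have hcard : (Finset.univ.filter (fun i => h j = h i)).card = α := by
        rw [← hbal (h j)]
        congr 1
        exact Finset.filter_congr (fun i _ => by constructor <;> exact Eq.symm)
      rw [hcard, nsmul_eq_mul]
    rw [Finset.sum_congr rfl (fun j _ => this j), ← Finset.mul_sum]
  rw [Finset.sum_comm]
  have hper : ∀ i : Fin n,
      ∑ g : Fin n → Bool,
        (δ i - sgn (g i) * (1 / (α : ℝ)) *
          ∑ j ∈ Finset.univ.filter (fun j => h j = h i), sgn (g j) * δ j) ^ 2
      = (2:ℝ)^n * ((1 - 2/(α:ℝ)) * δ i ^ 2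
          + (1/(α:ℝ))^2 * ∑ j ∈ Finset.univ.filter (fun j => h j = h i), δ j ^ 2) := by
    intro i
    exact per_i_sum α i _ (by simp) δ
  rw [Finset.sum_congr rfl (fun i _ => hper i), ← Finset.mul_sum]
  rw [Finset.sum_add_distrib, ← Finset.mul_sum, ← Finset.mul_sum, hdouble]
  have h2 : (2:ℝ)^n ≠ 0 := by positivity
  have hαR : (α:ℝ) ≠ 0 := Nat.cast_ne_zero.mpr hα.ne'
  field_simp
  ring
end

section
/- (Main theorem, error comparison) Let Δ be n×n with squared singular values i^{−η}, η ∈ [0,1), and compression factor α ∈ ℕ with α | n, α ≥ 2. The low-rank approximation error with n²/α parameters (rank n/(2α)) is ‖Δ‖_F² − Σ_{i=1}^{n/(2α)} i^{−η}, and the expected random-fold sketching error is ‖Δ‖_F² − (1/α) Σ_{i=1}^n i^{−η}. For all sufficiently large n, the sketching error is smaller whenever η < 1 − log(α)/log(2α), i.e., (1/α) Σ_{i=1}^n i^{−η} > Σ_{i=1}^{n/(2α)} i^{−η} holds eventually. -/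
open Finset

private lemma bern_le {x p : ℝ} (hx : 1 ≤ x) (hp0 : 0 ≤ p) (hp1 : p ≤ 1) :
    (x + 1) ^ p ≤ x ^ p + p * x ^ (p - 1) := by
  have hx0 : (0:ℝ) < x := lt_of_lt_of_le one_pos hx
  have h1 : (0:ℝ) ≤ 1 + 1 / x := by positivity
  have hs : (-1:ℝ) ≤ 1/x := by
    have h : (0:ℝ) ≤ 1/x := by positivity
    linarith
  have key : (1 + 1/x) ^ p ≤ 1 + p * (1/x) :=
    rpow_one_add_le_one_add_mul_self hs hp0 hp1
  have hxp : (0:ℝ) ≤ x ^ p := Real.rpow_nonneg hx0.le p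
  calc (x + 1) ^ p = (x * (1 + 1/x)) ^ p := by rw [mul_add, mul_one, mul_one_div, div_self hx0.ne']
    _ = x ^ p * (1 + 1/x) ^ p := Real.mul_rpow hx0.le h1
    _ ≤ x ^ p * (1 + p * (1/x)) := mul_le_mul_of_nonneg_left key hxp
    _ = x ^ p + p * (x ^ p / x) := by ring
    _ = x ^ p + p * x ^ (p - 1) := by rw [← Real.rpow_sub_one hx0.ne']

private lemma bern_ge {x p : ℝ} (hx : 1 ≤ x) (hp0 : 0 ≤ p) (hp1 : p ≤ 1) :
    (x - 1) ^ p ≤ x ^ p - p * x ^ (p - 1) := by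
  have hx0 : (0:ℝ) < x := lt_of_lt_of_le one_pos hx
  have hinv : 1 / x ≤ 1 := by rw [div_le_one hx0]; exact hx
  have key : (1 + (-(1/x))) ^ p ≤ 1 + p * (-(1/x)) :=
    rpow_one_add_le_one_add_mul_self (by linarith) hp0 hp1
  have hxp : (0:ℝ) ≤ x ^ p := Real.rpow_nonneg hx0.le p
  have h2 : x ^ p * (1 + p * (-(1/x))) = x ^ p - p * x ^ (p-1) := by
    rw [Real.rpow_sub_one hx0.ne']; ring
  have h3 : x * (1 + (-(1/x))) = x - 1 := by field_simp; ring
  calc (x - 1) ^ p = (x * (1 + (-(1/x)))) ^ p := by rw [h3]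
    _ = x ^ p * (1 + (-(1/x))) ^ p := Real.mul_rpow hx0.le (by linarith)
    _ ≤ x ^ p * (1 + p * (-(1/x))) := mul_le_mul_of_nonneg_left key hxp
    _ = x ^ p - p * x ^ (p - 1) := h2

private lemma sum_upper {η : ℝ} (hη0 : 0 ≤ η) (hη1 : η < 1) (m : ℕ) :
    ∑ i ∈ Finset.Icc 1 m, (i : ℝ) ^ (-η) ≤ (m : ℝ) ^ (1 - η) / (1 - η) := by
  have hp : (0:ℝ) < 1 - η := by linarith
  induction m with
  | zero => simp [Real.zero_rpow hp.ne']
  | succ m ih =>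
    rw [Finset.sum_Icc_succ_top (by omega : 1 ≤ m + 1)]
    have hm0 : (0:ℝ) ≤ (m:ℝ) := Nat.cast_nonneg m
    have hb := bern_ge (x := ((m:ℝ)+1)) (p := 1 - η) (by linarith) hp.le (by linarith)
    rw [show ((m:ℝ)+1) - 1 = (m:ℝ) from by ring, show (1-η) - 1 = -η from by ring] at hb
    have hcast : ((m + 1 : ℕ) : ℝ) = (m:ℝ) + 1 := by push_cast; ring
    rw [hcast]
    have step : (m:ℝ)^(1-η)/(1-η) + ((m:ℝ)+1)^(-η) ≤ ((m:ℝ)+1)^(1-η)/(1-η) := by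
      rw [le_div_iff₀ hp, add_mul, div_mul_cancel₀ _ hp.ne']
      nlinarith [Real.rpow_nonneg (show (0:ℝ) ≤ (m:ℝ)+1 by linarith) (-η)]
    linarith

private lemma sum_lower {η : ℝ} (hη0 : 0 ≤ η) (hη1 : η < 1) (n : ℕ) :
    ((n : ℝ) ^ (1 - η) - 1) / (1 - η) ≤ ∑ i ∈ Finset.Icc 1 n, (i : ℝ) ^ (-η) := by
  have hp : (0:ℝ) < 1 - η := by linarith
  have main : (((n:ℝ) + 1) ^ (1 - η) - 1) / (1 - η) ≤ ∑ i ∈ Finset.Icc 1 n, (i : ℝ) ^ (-η) := by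
    induction n with
    | zero => simp
    | succ n ih =>
      rw [Finset.sum_Icc_succ_top (by omega : 1 ≤ n + 1)]
      have hn0 : (0:ℝ) ≤ (n:ℝ) := Nat.cast_nonneg n
      have hb := bern_le (x := ((n:ℝ)+1)) (p := 1 - η) (by linarith) hp.le (by linarith)
      rw [show (1-η) - 1 = -η from by ring] at hb
      have hcast : ((n + 1 : ℕ) : ℝ) = (n:ℝ) + 1 := by push_cast; ring
      rw [hcast]
      rw [div_le_iff₀ hp] at ih ⊢
      have hexp : (∑ i ∈ Finset.Icc 1 n, (i : ℝ) ^ (-η) + ((n:ℝ)+1) ^ (-η)) * (1 - η)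
          = (∑ i ∈ Finset.Icc 1 n, (i : ℝ) ^ (-η)) * (1 - η) + (1-η) * ((n:ℝ)+1) ^ (-η) := by
        ring
      rw [hexp]
      linarith
  refine le_trans ?_ main
  have h1 : (n:ℝ) ^ (1-η) ≤ ((n:ℝ)+1) ^ (1-η) :=
    Real.rpow_le_rpow (Nat.cast_nonneg n) (by linarith) hp.le
  gcongr

/-- (Main theorem, error comparison) Let `Δ` be `n×n` with squared singular values
`i^(−η)`, `η ∈ [0,1)`, and compression factor `α ∈ ℕ`, `α ≥ 2`, `α ∣ n`. The low-rank
error with `n²/α` parameters (rank `n/(2α)`) is `‖Δ‖_F² − ∑_{i=1}^{n/(2α)} i^(−η)` and the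
expected sketching error is `‖Δ‖_F² − (1/α)∑_{i=1}^n i^(−η)`. If
`η < 1 − log α / log (2α)`, then for all sufficiently large `n` the sketching error is
smaller: `(1/α) ∑_{i=1}^n i^(−η) > ∑_{i=1}^{n/(2α)} i^(−η)`. -/
theorem sketching_beats_low_rank_eventually (α : ℕ) (hα : 2 ≤ α) (η : ℝ)
    (hη0 : 0 ≤ η) (hη1 : η < 1)
    (hη : η < 1 - Real.log (α : ℝ) / Real.log (2 * (α : ℝ))) :
    ∃ N : ℕ, ∀ n : ℕ, N ≤ n → α ∣ n →
      (∑ i ∈ Finset.Icc 1 (n / (2 * α)), (i : ℝ) ^ (-η))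
        < (1 / (α : ℝ)) * ∑ i ∈ Finset.Icc 1 n, (i : ℝ) ^ (-η) := by
  have hp : (0:ℝ) < 1 - η := by linarith
  have hα2 : (2:ℝ) ≤ (α:ℝ) := by exact_mod_cast hα
  have hα0 : (0:ℝ) < (α:ℝ) := by linarith
  have h2α : (1:ℝ) < 2 * (α:ℝ) := by linarith
  have hlog2α : 0 < Real.log (2 * (α:ℝ)) := Real.log_pos h2α
  have hkey : (α:ℝ) < (2 * (α:ℝ)) ^ (1 - η) := by
    have h1 : Real.log (α:ℝ) < (1 - η) * Real.log (2 * (α:ℝ)) := by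
      have h2 : Real.log (α:ℝ) / Real.log (2 * (α:ℝ)) < 1 - η := by linarith
      rw [div_lt_iff₀ hlog2α] at h2
      linarith
    calc (α:ℝ) = Real.exp (Real.log (α:ℝ)) := (Real.exp_log hα0).symm
      _ < Real.exp ((1 - η) * Real.log (2 * (α:ℝ))) := Real.exp_lt_exp.mpr h1
      _ = (2 * (α:ℝ)) ^ (1 - η) := by rw [Real.rpow_def_of_pos (by linarith), mul_comm]
  set c : ℝ := (α:ℝ) / (2 * (α:ℝ)) ^ (1 - η) with hc
  have h2αp : (0:ℝ) < (2 * (α:ℝ)) ^ (1 - η) := Real.rpow_pos_of_pos (by linarith) _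
  have hc1 : c < 1 := by rw [hc, div_lt_one h2αp]; exact hkey
  have hc0 : 0 < c := by rw [hc]; positivity
  have h1c : (0:ℝ) < 1 - c := by linarith
  obtain ⟨N, hN⟩ : ∃ N : ℕ, 1 / (1 - c) < (N:ℝ) ^ (1 - η) := by
    set b : ℝ := (1 / (1 - c)) ^ ((1 - η)⁻¹) with hbdef
    have hb0 : 0 < b := Real.rpow_pos_of_pos (by positivity) _
    obtain ⟨N, hNb⟩ := exists_nat_gt b
    refine ⟨N, ?_⟩
    have h1 : b ^ (1 - η) < (N:ℝ) ^ (1 - η) := Real.rpow_lt_rpow hb0.le hNb hp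
    have h2 : b ^ (1 - η) = 1 / (1 - c) := by
      rw [hbdef, ← Real.rpow_mul (by positivity), inv_mul_cancel₀ hp.ne', Real.rpow_one]
    linarith
  refine ⟨N + 1, fun n hn _hdvd => ?_⟩
  have hn1 : 1 ≤ n := by omega
  have hnR : (0:ℝ) < (n:ℝ) := by exact_mod_cast Nat.pos_of_ne_zero (by omega)
  have hL : ∑ i ∈ Finset.Icc 1 (n / (2 * α)), (i : ℝ) ^ (-η)
      ≤ ((n:ℝ) / (2 * (α:ℝ))) ^ (1 - η) / (1 - η) := by
    refine (sum_upper hη0 hη1 _).trans ?_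
    have hcb : ((n / (2 * α) : ℕ) : ℝ) ≤ (n:ℝ) / (2 * (α:ℝ)) := by
      calc ((n / (2 * α) : ℕ) : ℝ) ≤ (n:ℝ) / ((2 * α : ℕ):ℝ) := Nat.cast_div_le
        _ = (n:ℝ) / (2 * (α:ℝ)) := by push_cast; ring
    gcongr
  have hR : ((n:ℝ) ^ (1 - η) - 1) / (1 - η) ≤ ∑ i ∈ Finset.Icc 1 n, (i : ℝ) ^ (-η) :=
    sum_lower hη0 hη1 n
  have hmono : (N:ℝ) ^ (1-η) ≤ (n:ℝ) ^ (1-η) := by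
    refine Real.rpow_le_rpow (Nat.cast_nonneg _) ?_ hp.le
    exact_mod_cast (by omega : N ≤ n)
  have hbig : 1 / (1 - c) < (n:ℝ) ^ (1 - η) := lt_of_lt_of_le hN hmono
  have hbig' : 1 < (1 - c) * (n:ℝ) ^ (1 - η) := by
    rw [div_lt_iff₀ h1c] at hbig; linarith
  have hfin : ((n:ℝ) / (2 * (α:ℝ))) ^ (1 - η) / (1 - η)
      < (1 / (α:ℝ)) * (((n:ℝ) ^ (1 - η) - 1) / (1 - η)) := by
    have hdiv : ((n:ℝ) / (2 * (α:ℝ))) ^ (1 - η) = (n:ℝ) ^ (1-η) / (2 * (α:ℝ)) ^ (1-η) :=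
      Real.div_rpow hnR.le (by linarith : (0:ℝ) ≤ 2*(α:ℝ)) (1-η)
    have hA : (n:ℝ) ^ (1-η) / (2 * (α:ℝ)) ^ (1-η) = c * (n:ℝ) ^ (1-η) / (α:ℝ) := by
      rw [hc]; field_simp
    have hAB : c * (n:ℝ) ^ (1-η) < (n:ℝ) ^ (1-η) - 1 := by nlinarith
    have key2 : c * (n:ℝ) ^ (1-η) / (α:ℝ) < ((n:ℝ) ^ (1-η) - 1) / (α:ℝ) :=
      (div_lt_div_iff_of_pos_right hα0).mpr hAB
    have heq : (1/(α:ℝ)) * (((n:ℝ)^(1-η) - 1)/(1-η)) = (((n:ℝ)^(1-η) - 1)/(α:ℝ))/(1-η) := by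
      field_simp
    rw [hdiv, hA, heq]
    exact (div_lt_div_iff_of_pos_right hp).mpr key2
  calc ∑ i ∈ Finset.Icc 1 (n / (2 * α)), (i : ℝ) ^ (-η)
      ≤ ((n:ℝ) / (2 * (α:ℝ))) ^ (1 - η) / (1 - η) := hL
    _ < (1 / (α:ℝ)) * (((n:ℝ) ^ (1 - η) - 1) / (1 - η)) := hfin
    _ ≤ (1 / (α:ℝ)) * ∑ i ∈ Finset.Icc 1 n, (i : ℝ) ^ (-η) := by
        apply mul_le_mul_of_nonneg_left hR (by positivity)
end
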